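/- Let F ∈ ℝ[x_0,...,x_n] be a form of degree d with F(e) = 1 for e = (1,0,...,0), and write Res_{t_1}(f_re, f_im) = t_2^p · R_F where R_F is not divisible by t_2 (p ≥ d). If R_F(s, a) ≠ 0 for every real point (s, a) ∈ ℝ × ℝ^n with s ≠ 0, then F is hyperbolic with respect to e. -/

import Mathlib

open MvPolynomial

/-- A real univariate polynomial is real-rooted if all its complex roots are real. -/
def RealRooted (p : Polynomial ℝ) : Prop :=
  ∀ z : ℂ, Polynomial.aeval z p = 0 → z.im = 0

/-- Hyperbolicity of a form with respect to a point. -/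
def Hyperbolic {n : ℕ} (F : MvPolynomial (Fin (n + 1)) ℝ) (e : Fin (n + 1) → ℝ) : Prop :=
  MvPolynomial.eval e F ≠ 0 ∧
    ∀ a : Fin (n + 1) → ℝ,
      RealRooted
        (MvPolynomial.aeval
          (fun i => Polynomial.C (e i) * Polynomial.X - Polynomial.C (a i)) F)

/-- The Sylvester matrix of two polynomials `p`, `q`, regarded as having degrees `m` and `n`;
its determinant is the resultant of `p` and `q`. -/
def sylvester {R : Type*} [CommRing R] (p q : Polynomial R) (m n : ℕ) :
    Matrix (Fin (m + n)) (Fin (m + n)) R :=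
  Matrix.of fun i j =>
    if (j : ℕ) < n then
      (if (j : ℕ) ≤ (i : ℕ) ∧ (i : ℕ) ≤ m + (j : ℕ) then p.coeff (m + (j : ℕ) - (i : ℕ)) else 0)
    else
      (if (j : ℕ) - n ≤ (i : ℕ) ∧ (i : ℕ) ≤ n + ((j : ℕ) - n) then
        q.coeff (n + ((j : ℕ) - n) - (i : ℕ)) else 0)

open scoped Polynomial

lemma sylvester_map {R S : Type*} [CommRing R] [CommRing S] (f : R →+* S)
    (p q : Polynomial R) (m n : ℕ) :
    (sylvester p q m n).map f = sylvester (p.map f) (q.map f) m n := by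
  ext i j
  simp only [sylvester, Matrix.map_apply, Matrix.of_apply, Polynomial.coeff_map]
  split_ifs <;> simp

lemma window_sum {K : Type*} [CommRing K] (c : ℕ → K) (T N t : ℕ) (α : K) (ht : N + t < T) :
    ∑ i ∈ Finset.range T, α ^ (T - 1 - i) *
      (if t ≤ i ∧ i ≤ N + t then c (N + t - i) else 0)
    = α ^ (T - 1 - N - t) * ∑ k ∈ Finset.range (N + 1), c k * α ^ k := by
  simp only [mul_ite, mul_zero]
  rw [← Finset.sum_filter, Finset.mul_sum]
  have hfil : (Finset.range T).filter (fun i => t ≤ i ∧ i ≤ N + t) = Finset.Icc t (N + t) := by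
    ext i; simp [Finset.mem_filter, Finset.mem_Icc]; omega
  rw [hfil]
  refine Finset.sum_nbij' (i := fun i => N + t - i) (j := fun k => N + t - k) ?_ ?_ ?_ ?_ ?_
  · intro i hi; simp only [Finset.mem_Icc] at hi; simp; omega
  · intro k hk; simp only [Finset.mem_range] at hk; simp [Finset.mem_Icc]; omega
  · intro i hi; simp only [Finset.mem_Icc] at hi
    show N + t - (N + t - i) = i; omega
  · intro k hk; simp only [Finset.mem_range] at hk
    show N + t - (N + t - k) = k; omega
  · intro i hi
    simp only [Finset.mem_Icc] at hi
    show α ^ (T - 1 - i) * c (N + t - i) = α ^ (T - 1 - N - t) * (c (N + t - i) * α ^ (N + t - i))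
    rw [← mul_assoc, mul_comm (α ^ (T - 1 - N - t)), mul_assoc, ← pow_add]
    have : T - 1 - N - t + (N + t - i) = T - 1 - i := by omega
    rw [this, mul_comm]

lemma sylvester_det_eq_zero {K : Type*} [Field K] (p q : K[X]) (m n : ℕ) (hmn : 0 < m + n)
    (α : K)
    (hp : ∑ k ∈ Finset.range (m + 1), p.coeff k * α ^ k = 0)
    (hq : ∑ k ∈ Finset.range (n + 1), q.coeff k * α ^ k = 0) :
    (sylvester p q m n).det = 0 := by
  by_contra hdet
  have hv : Matrix.vecMul (fun i : Fin (m + n) => α ^ (m + n - 1 - (i : ℕ)))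
      (sylvester p q m n) = 0 := by
    funext j
    simp only [Matrix.vecMul, dotProduct, sylvester, Matrix.of_apply, Pi.zero_apply]
    rw [Fin.sum_univ_eq_sum_range (fun i => α ^ (m + n - 1 - i) *
      (if (j : ℕ) < n then
        (if (j : ℕ) ≤ i ∧ i ≤ m + (j : ℕ) then p.coeff (m + (j : ℕ) - i) else 0)
      else
        (if (j : ℕ) - n ≤ i ∧ i ≤ n + ((j : ℕ) - n) then
          q.coeff (n + ((j : ℕ) - n) - i) else 0)))]
    by_cases hj : (j : ℕ) < n
    · simp only [if_pos hj]
      have hlt : m + (j : ℕ) < m + n := by omega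
      rw [show (fun i => α ^ (m + n - 1 - i) *
          (if (j : ℕ) ≤ i ∧ i ≤ m + (j : ℕ) then p.coeff (m + (j : ℕ) - i) else 0)) = fun i =>
          α ^ (m + n - 1 - i) *
          (if (j : ℕ) ≤ i ∧ i ≤ m + (j : ℕ) then p.coeff (m + (j : ℕ) - i) else 0) from rfl]
      rw [window_sum (fun k => p.coeff k) (m + n) m (j : ℕ) α hlt, hp, mul_zero]
    · simp only [if_neg hj]
      have hlt : n + ((j : ℕ) - n) < m + n := by
        have := j.isLt; omega
      rw [window_sum (fun k => q.coeff k) (m + n) n ((j : ℕ) - n) α hlt, hq, mul_zero]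
  have hz := Matrix.eq_zero_of_vecMul_eq_zero hdet hv
  have h1 := congrFun hz ⟨m + n - 1, by omega⟩
  simp only [Pi.zero_apply] at h1
  rw [show m + n - 1 - (m + n - 1) = 0 by omega, pow_zero] at h1
  exact one_ne_zero h1

lemma exists_bad_index {n d : ℕ} (b : Fin (n+1) →₀ ℕ) (hdeg : b.degree = d)
    (hb : b ≠ Finsupp.single 0 d) : ∃ j, j ∈ b.support ∧ j ≠ 0 ∧ b 0 < d := by
  have hsum : ∑ i ∈ b.support, b i = d := hdeg
  by_cases h : ∀ j, j ≠ 0 → b j = 0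
  · exfalso
    apply hb
    have hb0 : b 0 = d := by
      rw [← hsum]
      refine (Finset.sum_eq_single 0 (fun j _ hj => h j hj) (fun h0 => ?_)).symm
      simpa using Finsupp.notMem_support_iff.mp h0
    ext i
    rcases eq_or_ne i 0 with rfl | hi
    · simp [hb0]
    · simp [h i hi, Finsupp.single_apply, (Ne.symm hi)]
  · push_neg at h
    obtain ⟨j, hj0, hbj⟩ := h
    have hjmem : j ∈ b.support := Finsupp.mem_support_iff.mpr hbj
    refine ⟨j, hjmem, hj0, ?_⟩
    have h2 : b 0 + b j ≤ ∑ i ∈ b.support, b i := by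
      by_cases h0 : b 0 = 0
      · rw [h0, zero_add]
        exact Finset.single_le_sum (f := b) (fun i _ => Nat.zero_le _) hjmem
      · have hsub : ({0, j} : Finset (Fin (n+1))) ⊆ b.support := by
          intro x hx
          simp only [Finset.mem_insert, Finset.mem_singleton] at hx
          rcases hx with rfl | rfl
          · exact Finsupp.mem_support_iff.mpr h0
          · exact hjmem
        calc b 0 + b j = ∑ i ∈ ({0, j} : Finset (Fin (n+1))), b i :=
              (Finset.sum_pair (Ne.symm hj0)).symm
          _ ≤ _ := Finset.sum_le_sum_of_subset hsub
    have : 0 < b j := Nat.pos_of_ne_zero hbj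
    omega

lemma degree_of_mem_support {n d : ℕ} {F : MvPolynomial (Fin (n+1)) ℝ}
    (hhom : F.IsHomogeneous d) {b : Fin (n+1) →₀ ℕ} (hb : b ∈ F.support) :
    b.degree = d := by
  rw [Finsupp.degree_eq_weight_one]
  exact hhom (MvPolynomial.mem_support_iff.mp hb)

lemma eval_e_eq_coeff {n d : ℕ} (hd : 0 < d) (F : MvPolynomial (Fin (n+1)) ℝ)
    (hhom : F.IsHomogeneous d) :
    MvPolynomial.eval (fun i : Fin (n+1) => if i = 0 then (1:ℝ) else 0) F
      = MvPolynomial.coeff (Finsupp.single 0 d) F := by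
  rw [MvPolynomial.eval_eq]
  rw [Finset.sum_eq_single (Finsupp.single 0 d)]
  · rw [Finsupp.support_single_ne_zero _ hd.ne']
    simp
  · intro b hb hne
    obtain ⟨j, hjmem, hj0, -⟩ := exists_bad_index b (degree_of_mem_support hhom hb) hne
    rw [Finset.prod_eq_zero hjmem]
    · exact mul_zero _
    · rw [if_neg hj0]
      exact zero_pow (Finsupp.mem_support_iff.mp hjmem)
  · intro h
    rw [MvPolynomial.notMem_support_iff.mp h, zero_mul]

lemma term_natDegree_le {n : ℕ} (c : ℂ) (bb : Fin n → ℂ) (r : ℝ) (b : Fin (n+1) →₀ ℕ) :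
    (algebraMap ℝ (Polynomial ℂ) r * ∏ i ∈ b.support,
      (Fin.cons (Polynomial.X + Polynomial.C c) (fun i => Polynomial.C (bb i)) :
        Fin (n+1) → Polynomial ℂ) i ^ b i).natDegree ≤ b 0 := by
  set g : Fin (n+1) → Polynomial ℂ :=
    Fin.cons (Polynomial.X + Polynomial.C c) (fun i => Polynomial.C (bb i)) with hg
  have hg0 : g 0 = Polynomial.X + Polynomial.C c := rfl
  have hgs : ∀ i : Fin n, g i.succ = Polynomial.C (bb i) := fun i => rfl
  have h1 : (algebraMap ℝ (Polynomial ℂ) r *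
      ∏ i ∈ b.support, g i ^ b i).natDegree ≤ (∏ i ∈ b.support, g i ^ b i).natDegree := by
    rw [Polynomial.algebraMap_apply]
    exact Polynomial.natDegree_C_mul_le _ _
  refine h1.trans ((Polynomial.natDegree_prod_le _ _).trans ?_)
  have h2 : ∀ i ∈ b.support, (g i ^ b i).natDegree ≤ if i = 0 then b 0 else 0 := by
    intro i _
    refine (Polynomial.natDegree_pow_le).trans ?_
    refine Fin.cases ?_ ?_ i
    · simp [hg0, Polynomial.natDegree_X_add_C]
    · intro k; simp [hgs]
  refine (Finset.sum_le_sum h2).trans ?_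
  rw [Finset.sum_ite_eq' b.support 0 (fun _ => b 0)]
  split_ifs <;> simp

lemma coeff_aeval_high {n d : ℕ} (F : MvPolynomial (Fin (n+1)) ℝ)
    (hhom : F.IsHomogeneous d) (c : ℂ) (bb : Fin n → ℂ) (k : ℕ) (hk : d < k) :
    (MvPolynomial.aeval
        (Fin.cons (Polynomial.X + Polynomial.C c) (fun i => Polynomial.C (bb i)) :
          Fin (n+1) → Polynomial ℂ) F).coeff k = 0 := by
  rw [MvPolynomial.aeval_def, MvPolynomial.eval₂_eq, Polynomial.finset_sum_coeff]
  apply Finset.sum_eq_zero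
  intro b hb
  apply Polynomial.coeff_eq_zero_of_natDegree_lt
  refine lt_of_le_of_lt (term_natDegree_le c bb _ b) (lt_of_le_of_lt ?_ hk)
  calc b 0 ≤ b.degree := Finsupp.le_degree 0 b
    _ = d := degree_of_mem_support hhom hb

lemma coeff_aeval_top {n d : ℕ} (hd : 0 < d) (F : MvPolynomial (Fin (n+1)) ℝ)
    (hhom : F.IsHomogeneous d) (c : ℂ) (bb : Fin n → ℂ) :
    (MvPolynomial.aeval
        (Fin.cons (Polynomial.X + Polynomial.C c) (fun i => Polynomial.C (bb i)) :
          Fin (n+1) → Polynomial ℂ) F).coeff d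
      = algebraMap ℝ ℂ (MvPolynomial.coeff (Finsupp.single 0 d) F) := by
  set g : Fin (n+1) → Polynomial ℂ :=
    Fin.cons (Polynomial.X + Polynomial.C c) (fun i => Polynomial.C (bb i)) with hg
  have hg0 : g 0 = Polynomial.X + Polynomial.C c := rfl
  have hgs : ∀ i : Fin n, g i.succ = Polynomial.C (bb i) := fun i => rfl
  have hgdeg : ∀ i, (g i).natDegree ≤ 1 := by
    intro i
    refine Fin.cases ?_ ?_ i
    · rw [hg0]; exact le_of_eq (Polynomial.natDegree_X_add_C c)
    · intro k; rw [hgs]; simp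
  rw [MvPolynomial.aeval_def, MvPolynomial.eval₂_eq, Polynomial.finset_sum_coeff]
  rw [Finset.sum_eq_single (Finsupp.single 0 d)]
  · rw [Finsupp.support_single_ne_zero _ hd.ne']
    rw [Polynomial.algebraMap_apply, Polynomial.coeff_C_mul]
    simp only [Finset.prod_singleton, Finsupp.single_eq_same, hg0]
    have hnd : ((Polynomial.X + Polynomial.C c) ^ d).natDegree = d := by
      rw [Polynomial.natDegree_pow, Polynomial.natDegree_X_add_C, mul_one]
    have hmon := (Polynomial.monic_X_add_C c).pow d
    have := hmon.coeff_natDegree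
    rw [hnd] at this
    rw [this, mul_one]
  · intro b hb hne
    obtain ⟨j, hjmem, hj0, hblt⟩ := exists_bad_index b (degree_of_mem_support hhom hb) hne
    apply Polynomial.coeff_eq_zero_of_natDegree_lt
    exact lt_of_le_of_lt (hg ▸ term_natDegree_le c bb _ b) hblt
  · intro h
    rw [MvPolynomial.notMem_support_iff.mp h, map_zero, zero_mul, Polynomial.coeff_zero]

/-- Let `F` be a form of degree `d` with `F(e) = 1`, `e = (1,0,…,0)`. Setting
`f_x(t) = F(t,x)` and decomposing `f_x(t₁+it₂) = f_re + i f_im`, write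
`Res_{t₁}(f_re, f_im) = t₂^p ⬝ R_F` with `t₂ ∤ R_F` and `p ≥ d`. Here `f_re, f_im` are
polynomials in `t₁` over `ℝ[t₂, x₁, …, xₙ]` (variable `0` of the coefficient ring is `t₂`).
If `R_F(s,a) ≠ 0` for every real point `(s,a)` with `s ≠ 0`, then `F` is hyperbolic
with respect to `e`. -/
theorem hyperbolic_of_RF_nonvanishing {n d : ℕ} (hd : 0 < d)
    (F : MvPolynomial (Fin (n + 1)) ℝ) (hhom : F.IsHomogeneous d)
    (e : Fin (n + 1) → ℝ) (he : e = fun i => if i = 0 then 1 else 0)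
    (hF : MvPolynomial.eval e F = 1)
    (fre fim : Polynomial (MvPolynomial (Fin (n + 1)) ℝ))
    (hdecomp : ∀ (s₁ s₂ : ℝ) (a : Fin n → ℝ),
      MvPolynomial.aeval
          (Fin.cons ((s₁ : ℂ) + (s₂ : ℂ) * Complex.I) (fun i => (a i : ℂ))) F
        = (((fre.map (MvPolynomial.eval (Fin.cons s₂ a))).eval s₁ : ℝ) : ℂ)
          + (((fim.map (MvPolynomial.eval (Fin.cons s₂ a))).eval s₁ : ℝ) : ℂ) * Complex.I)
    (p : ℕ) (hp : d ≤ p) (RF : MvPolynomial (Fin (n + 1)) ℝ)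
    (hfact : (sylvester fre fim d (d - 1)).det = (MvPolynomial.X 0) ^ p * RF)
    (hndvd : ¬ (MvPolynomial.X 0 : MvPolynomial (Fin (n + 1)) ℝ) ∣ RF)
    (hnonzero : ∀ (s : ℝ) (a : Fin n → ℝ), s ≠ 0 →
      MvPolynomial.eval (Fin.cons s a) RF ≠ 0) :
    Hyperbolic F e := by
  subst he
  refine ⟨by rw [hF]; exact one_ne_zero, ?_⟩
  intro a z hz
  by_contra him
  set s₂ : ℝ := z.im with hs₂
  set s₁ : ℝ := z.re - a 0 with hs₁
  set a' : Fin n → ℝ := fun i => -(a i.succ) with ha'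
  -- Step 1: the root equation
  have hfun : (fun i : Fin (n+1) => (Polynomial.aeval z)
        (Polynomial.C ((fun i : Fin (n+1) => if i = 0 then (1:ℝ) else 0) i) * Polynomial.X
          - Polynomial.C (a i)))
      = Fin.cons ((s₁ : ℂ) + (s₂ : ℂ) * Complex.I) (fun i => ((a' i : ℝ) : ℂ)) := by
    funext i
    refine Fin.cases ?_ ?_ i
    · simp only [if_pos rfl, map_sub, map_mul, Polynomial.aeval_C, Polynomial.aeval_X,
        Fin.cons_zero, map_one, one_mul, Complex.coe_algebraMap]
      rw [← Complex.re_add_im z]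
      push_cast [hs₁, hs₂]
      ring
    · intro k
      simp [Fin.succ_ne_zero, ha']
  have hroot : MvPolynomial.aeval
      (Fin.cons ((s₁ : ℂ) + (s₂ : ℂ) * Complex.I) (fun i => ((a' i : ℝ) : ℂ))) F = 0 := by
    rw [← hfun, ← MvPolynomial.comp_aeval_apply]
    exact hz
  -- Step 2: real and imaginary parts vanish
  have hkey := (hdecomp s₁ s₂ a').symm.trans hroot
  rw [Complex.ext_iff] at hkey
  simp only [Complex.add_re, Complex.ofReal_re, Complex.mul_re, Complex.I_re, mul_zero,
    Complex.ofReal_im, Complex.I_im, mul_one, zero_sub, Complex.add_im, Complex.mul_im,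
    Complex.zero_re, Complex.zero_im, zero_add, zero_mul, add_zero, neg_zero] at hkey
  obtain ⟨hre, himz⟩ := hkey
  set pre : Polynomial ℝ := fre.map (MvPolynomial.eval (Fin.cons s₂ a')) with hpre
  set pim : Polynomial ℝ := fim.map (MvPolynomial.eval (Fin.cons s₂ a')) with hpim
  -- Step 3: the comparison polynomial h
  set g : Fin (n+1) → Polynomial ℂ :=
    Fin.cons (Polynomial.X + Polynomial.C ((s₂ : ℂ) * Complex.I))
      (fun i => Polynomial.C ((a' i : ℝ) : ℂ)) with hg
  set h : Polynomial ℂ := MvPolynomial.aeval g F with hh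
  have hAeval : ∀ t : ℝ, h.eval (t : ℂ) = MvPolynomial.aeval
      (Fin.cons ((t : ℂ) + (s₂ : ℂ) * Complex.I) (fun i => ((a' i : ℝ) : ℂ))) F := by
    intro t
    have hcomp := MvPolynomial.comp_aeval_apply (f := g)
      ((Polynomial.aeval ((t : ℝ) : ℂ)).restrictScalars ℝ) F
    simp only [AlgHom.coe_restrictScalars'] at hcomp
    rw [Polynomial.coe_aeval_eq_eval] at hcomp
    have hgev : (fun i => Polynomial.eval ((t : ℝ) : ℂ) (g i))
        = Fin.cons ((t : ℂ) + (s₂ : ℂ) * Complex.I) (fun i => ((a' i : ℝ) : ℂ)) := by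
      funext i
      refine Fin.cases ?_ ?_ i
      · simp [hg]
      · intro k; simp [hg]
    rw [hh, hcomp, hgev]
  have evmap : ∀ (q : Polynomial ℝ) (t : ℝ),
      (q.map (algebraMap ℝ ℂ)).eval ((t : ℝ) : ℂ) = ((q.eval t : ℝ) : ℂ) := by
    intro q t
    rw [Polynomial.eval_map, show ((t : ℝ) : ℂ) = algebraMap ℝ ℂ t from rfl,
      Polynomial.eval₂_at_apply]
    rfl
  have hP : ∀ k, h.coeff k = ((pre.coeff k : ℝ) : ℂ) + ((pim.coeff k : ℝ) : ℂ) * Complex.I := by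
    have hPh : pre.map (algebraMap ℝ ℂ) + (pim.map (algebraMap ℝ ℂ)) * Polynomial.C Complex.I
        = h := by
      apply Polynomial.eq_of_infinite_eval_eq
      apply Set.Infinite.mono (s := Set.range (Complex.ofReal))
      · rintro _ ⟨t, rfl⟩
        simp only [Set.mem_setOf_eq, Polynomial.eval_add, Polynomial.eval_mul,
          Polynomial.eval_C]
        rw [evmap pre t, evmap pim t, hAeval t, hdecomp t s₂ a']
      · exact Set.infinite_range_of_injective Complex.ofReal_injective
    intro k
    rw [← hPh]
    simp only [Polynomial.coeff_add, Polynomial.coeff_mul_C, Polynomial.coeff_map]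
    rfl
  have hdegh : ∀ k, d < k → h.coeff k = 0 := by
    intro k hk
    rw [hh, hg]
    exact coeff_aeval_high F hhom _ _ k hk
  have hcoeffd : h.coeff d = 1 := by
    rw [hh, hg, coeff_aeval_top hd F hhom, ← eval_e_eq_coeff hd F hhom, hF, map_one]
  have hhi : ∀ k, d < k → pre.coeff k = 0 ∧ pim.coeff k = 0 := by
    intro k hk
    have h0 : h.coeff k = 0 := hdegh k hk
    have := (hP k).symm.trans h0
    rw [Complex.ext_iff] at this
    simpa using this
  have hpimd : pim.coeff d = 0 := by
    have := (hP d).symm.trans hcoeffd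
    rw [Complex.ext_iff] at this
    simpa using this.2
  have hdegpre : pre.natDegree ≤ d :=
    Polynomial.natDegree_le_iff_coeff_eq_zero.mpr fun k hk => (hhi k hk).1
  have hdegpim : pim.natDegree ≤ d - 1 := by
    refine Polynomial.natDegree_le_iff_coeff_eq_zero.mpr fun k hk => ?_
    rcases eq_or_lt_of_le (show d ≤ k by omega) with rfl | hlt
    · exact hpimd
    · exact (hhi k hlt).2
  -- Step 4: contradiction via the Sylvester determinant
  have hdet_ne : (sylvester pre pim d (d - 1)).det ≠ 0 := by
    have hL : MvPolynomial.eval (Fin.cons s₂ a') ((sylvester fre fim d (d - 1)).det)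
        = (sylvester pre pim d (d - 1)).det := by
      rw [RingHom.map_det, RingHom.mapMatrix_apply, sylvester_map]
    rw [← hL, hfact]
    simp only [map_mul, map_pow, MvPolynomial.eval_X, Fin.cons_zero]
    exact mul_ne_zero (pow_ne_zero _ him) (hnonzero s₂ a' him)
  apply hdet_ne
  apply sylvester_det_eq_zero pre pim d (d - 1) (by omega) s₁
  · rw [← Polynomial.eval_eq_sum_range' (lt_of_le_of_lt hdegpre (Nat.lt_succ_self d))]
    exact hre
  · rw [← Polynomial.eval_eq_sum_range' (show pim.natDegree < d - 1 + 1 by omega)]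
    exact himz
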